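/- Let f, s, k be positive real numbers with k ≤ f·s, and let m be a natural number with 2 ≤ m ≤ s. Then the probability that a fixed existing node of facet degree k receives more than one merge from the incoming facet satisfies ∑_{l=2}^{m} C(m,l)·(k/(f·s))^l·(1 − k/(f·s))^{m−l} ≤ e^{k/f} − 1 − k/f. -/

import Mathlib

/-- For positive reals `f, s, k` with `k ≤ f·s` and a natural `m` with
`2 ≤ m ≤ s`, the probability that a fixed existing node of facet degree `k` receives more
than one merge from the incoming facet satisfies
`∑_{l=2}^{m} C(m,l)·(k/(f·s))^l·(1 − k/(f·s))^{m−l} ≤ e^{k/f} − 1 − k/f`. -/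
theorem multiple_merge_prob_bound (f s k : ℝ) (hf : 0 < f) (hs : 0 < s) (hk : 0 < k)
    (hkfs : k ≤ f * s) (m : ℕ) (hm2 : 2 ≤ m) (hms : (m : ℝ) ≤ s) :
    ∑ l ∈ Finset.Icc 2 m,
        (m.choose l : ℝ) * (k / (f * s)) ^ l * (1 - k / (f * s)) ^ (m - l) ≤
      Real.exp (k / f) - 1 - k / f := by
  set p : ℝ := k / (f * s) with hp
  set x : ℝ := k / f with hx
  have hfs : 0 < f * s := mul_pos hf hs
  have hp0 : 0 < p := div_pos hk hfs
  have hp1 : p ≤ 1 := (div_le_one hfs).mpr hkfs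
  have hx0 : 0 < x := div_pos hk hf
  have hmp : (m : ℝ) * p ≤ x := by
    have : (m : ℝ) * p ≤ s * p := by
      exact mul_le_mul_of_nonneg_right hms hp0.le
    have hsx : s * p = x := by
      rw [hp, hx]
      field_simp
    linarith
  -- term bound
  have hterm : ∀ l ∈ Finset.Icc 2 m,
      (m.choose l : ℝ) * p ^ l * (1 - p) ^ (m - l) ≤ x ^ l / l.factorial := by
    intro l _
    have h1 : (1 - p) ^ (m - l) ≤ 1 :=
      pow_le_one₀ (by linarith) (by linarith)
    have h2 : (m.choose l : ℝ) * p ^ l * (1 - p) ^ (m - l) ≤ (m.choose l : ℝ) * p ^ l := by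
      have : (0:ℝ) ≤ (m.choose l : ℝ) * p ^ l :=
        mul_nonneg (Nat.cast_nonneg _) (pow_nonneg hp0.le _)
      nlinarith [pow_nonneg (by linarith : (0:ℝ) ≤ 1 - p) (m - l)]
    have h3 : (m.choose l : ℝ) ≤ (m : ℝ) ^ l / l.factorial := by
      simpa using Nat.choose_le_pow_div (α := ℝ) l m
    have h4 : (m.choose l : ℝ) * p ^ l ≤ ((m : ℝ) ^ l / l.factorial) * p ^ l :=
      mul_le_mul_of_nonneg_right h3 (pow_nonneg hp0.le _)
    have h5 : ((m : ℝ) ^ l / l.factorial) * p ^ l = ((m : ℝ) * p) ^ l / l.factorial := by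
      rw [mul_pow]; ring
    have h6 : ((m : ℝ) * p) ^ l ≤ x ^ l :=
      pow_le_pow_left₀ (mul_nonneg (Nat.cast_nonneg _) hp0.le) hmp l
    have h7 : ((m : ℝ) * p) ^ l / l.factorial ≤ x ^ l / l.factorial :=
      div_le_div_of_nonneg_right h6 (by positivity) |>.trans_eq rfl
    calc (m.choose l : ℝ) * p ^ l * (1 - p) ^ (m - l) ≤ (m.choose l : ℝ) * p ^ l := h2
      _ ≤ ((m : ℝ) ^ l / l.factorial) * p ^ l := h4
      _ = ((m : ℝ) * p) ^ l / l.factorial := h5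
      _ ≤ x ^ l / l.factorial := h7
  have hsum1 : ∑ l ∈ Finset.Icc 2 m,
      (m.choose l : ℝ) * p ^ l * (1 - p) ^ (m - l) ≤
      ∑ l ∈ Finset.Icc 2 m, x ^ l / l.factorial := Finset.sum_le_sum hterm
  -- relate Icc sum to range sum
  have hset : Finset.range (m + 1) = insert 0 (insert 1 (Finset.Icc 2 m)) := by
    ext a; simp [Finset.mem_range, Finset.mem_Icc]; omega
  have h01 : (0 : ℕ) ∉ insert 1 (Finset.Icc 2 m) := by simp
  have h1m : (1 : ℕ) ∉ Finset.Icc 2 m := by simp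
  have hsplit : ∑ l ∈ Finset.range (m + 1), x ^ l / l.factorial =
      1 + x + ∑ l ∈ Finset.Icc 2 m, x ^ l / l.factorial := by
    rw [hset, Finset.sum_insert h01, Finset.sum_insert h1m]
    norm_num
    ring
  have hexp : ∑ l ∈ Finset.range (m + 1), x ^ l / l.factorial ≤ Real.exp x :=
    Real.sum_le_exp_of_nonneg hx0.le _
  linarith
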